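/- Let n ≥ 3, 1 ≤ i ≤ n-1, 0 ≤ t ≤ n-1 with i + t ≤ n. The set A = {α ∈ ℕ^n : |α| = n and α_{t+1} + ... + α_{t+i} ≤ i+1} is closed under the property that its ℝ≥0-cone equals {y ∈ ℝ^n : y_k ≥ 0 for all k, and (i+1)·(Σ_{k≤t} y_k + Σ_{k>t+i} y_k) − (n−i−1)·Σ_{k=t+1}^{t+i} y_k ≥ 0}. -/

import Mathlib

open scoped NNReal

theorem stmt0 (n i t : ℕ) (hn : 3 ≤ n) (hi1 : 1 ≤ i) (hi2 : i ≤ n - 1)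
    (ht : t ≤ n - 1) (hit : i + t ≤ n) :
    (Submodule.span ℝ≥0
        ((fun (α : Fin n → ℕ) (k : Fin n) => (α k : ℝ)) ''
          {α : Fin n → ℕ | ∑ k, α k = n ∧
            ∑ k ∈ Finset.univ.filter (fun m : Fin n => t ≤ m.val ∧ m.val < t + i), α k ≤ i + 1}) :
      Set (Fin n → ℝ)) =
    {y : Fin n → ℝ | (∀ k, 0 ≤ y k) ∧
      0 ≤ (i + 1 : ℝ) *
            (∑ k ∈ Finset.univ.filter (fun m : Fin n => ¬(t ≤ m.val ∧ m.val < t + i)), y k)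
          - ((n : ℝ) - i - 1) *
            (∑ k ∈ Finset.univ.filter (fun m : Fin n => t ≤ m.val ∧ m.val < t + i), y k)} := by
  classical
  have hin : i + 1 ≤ n := by omega
  have hinR : (i : ℝ) + 1 ≤ n := by exact_mod_cast hin
  set S : Finset (Fin n) :=
    Finset.univ.filter (fun m : Fin n => t ≤ m.val ∧ m.val < t + i) with hSdef
  set T : Finset (Fin n) :=
    Finset.univ.filter (fun m : Fin n => ¬(t ≤ m.val ∧ m.val < t + i)) with hTdef
  have hmemS : ∀ p : Fin n, p ∈ S ↔ (t ≤ p.val ∧ p.val < t + i) := by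
    intro p; simp [hSdef]
  have hmemT : ∀ p : Fin n, p ∈ T ↔ ¬(t ≤ p.val ∧ p.val < t + i) := by
    intro p; simp [hTdef]
  set G : Set (Fin n → ℝ) := ((fun (α : Fin n → ℕ) (k : Fin n) => (α k : ℝ)) ''
          {α : Fin n → ℕ | ∑ k, α k = n ∧ ∑ k ∈ S, α k ≤ i + 1}) with hGdef
  apply Set.Subset.antisymm
  · -- span ⊆ cone
    intro y hy
    replace hy : y ∈ Submodule.span ℝ≥0 G := hy
    induction hy using Submodule.span_induction with
    | mem x hx =>
        obtain ⟨α, ⟨hsum, hle⟩, rfl⟩ := hx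
        refine ⟨fun k => by positivity, ?_⟩
        have hST : (∑ k ∈ S, α k) + (∑ k ∈ T, α k) = n := by
          rw [hSdef, hTdef, Finset.sum_filter_add_sum_filter_not, hsum]
        have h1 : ((∑ k ∈ S, α k : ℕ) : ℝ) + ((∑ k ∈ T, α k : ℕ) : ℝ) = n := by
          exact_mod_cast hST
        have h2 : ((∑ k ∈ S, α k : ℕ) : ℝ) ≤ (i : ℝ) + 1 := by exact_mod_cast hle
        have h3 : (0:ℝ) ≤ ((∑ k ∈ S, α k : ℕ) : ℝ) := by positivity
        have e1 : (∑ k ∈ S, ((α k : ℝ))) = ((∑ k ∈ S, α k : ℕ) : ℝ) := by push_cast; rfl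
        have e2 : (∑ k ∈ T, ((α k : ℝ))) = ((∑ k ∈ T, α k : ℕ) : ℝ) := by push_cast; rfl
        rw [e1, e2]
        nlinarith [h1, h2, h3, hinR]
    | zero => exact ⟨fun k => le_refl 0, by simp⟩
    | add x z hx hz ihx ihz =>
        obtain ⟨hx0, hx1⟩ := ihx
        obtain ⟨hz0, hz1⟩ := ihz
        refine ⟨fun k => add_nonneg (hx0 k) (hz0 k), ?_⟩
        simp only [Pi.add_apply, Finset.sum_add_distrib]
        linarith
    | smul c x hx ihx =>
        obtain ⟨hx0, hx1⟩ := ihx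
        refine ⟨fun k => mul_nonneg c.coe_nonneg (hx0 k), ?_⟩
        simp only [NNReal.smul_def, Pi.smul_apply, smul_eq_mul, ← Finset.mul_sum]
        nlinarith [c.coe_nonneg, hx1]
  · -- cone ⊆ span
    rintro y ⟨hy0, hy1⟩
    show y ∈ Submodule.span ℝ≥0 G
    have hsm : ∀ (c : ℝ≥0) (r : ℝ), c • r = (c:ℝ) * r := fun _ _ => rfl
    -- the "n e_a" generators
    have hgen1 : ∀ a : Fin n, (a ∈ T ∨ i + 1 = n) →
        (fun m : Fin n => if m = a then (n:ℝ) else 0) ∈ Submodule.span ℝ≥0 G := by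
      intro a ha
      apply Submodule.subset_span
      refine ⟨fun m => if m = a then n else 0, ⟨?_, ?_⟩, ?_⟩
      · simp [Finset.sum_ite_eq']
      · rw [Finset.sum_ite_eq']
        rcases ha with ha | ha
        · have : a ∉ S := by
            rw [hmemS]; exact (hmemT a).1 ha
          simp [this]
        · split <;> omega
      · funext m
        simp only
        split <;> simp
    by_cases hcase : i + 1 = n
    · -- here every n e_a is a generator
      have hapf : ∀ a : Fin n, 0 ≤ y a / (n:ℝ) :=
        fun a => div_nonneg (hy0 a) (Nat.cast_nonneg n)
      have key : y = ∑ a : Fin n, (⟨y a / n, hapf a⟩ : ℝ≥0) •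
          (fun m : Fin n => if m = a then (n:ℝ) else 0) := by
        funext p
        simp only [Finset.sum_apply, Pi.smul_apply, hsm, Nonneg.mk_smul, smul_eq_mul, NNReal.coe_mk, mul_ite, mul_zero]
        rw [Finset.sum_ite_eq]
        simp only [Finset.mem_univ, if_true]
        have hn0 : (n:ℝ) ≠ 0 := by positivity
        field_simp
      rw [key]
      exact Submodule.sum_mem _ fun a _ =>
        Submodule.smul_mem _ _ (hgen1 a (Or.inr hcase))
    · have hlt : i + 1 < n := lt_of_le_of_ne hin hcase
      set sS : ℝ := ∑ k ∈ S, y k with hsSdef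
      set B : ℝ := ∑ k ∈ T, y k with hBdef
      have hs0 : 0 ≤ sS := Finset.sum_nonneg fun k _ => hy0 k
      have hB0 : 0 ≤ B := Finset.sum_nonneg fun k _ => hy0 k
      have hdpos : (0:ℝ) < (n : ℝ) - i - 1 := by
        have : (i:ℝ) + 1 < n := by exact_mod_cast hlt
        linarith
      by_cases hB : B = 0
      · -- y = 0
        have hyT : ∀ k ∈ T, y k = 0 := by
          intro k hk
          have := (Finset.sum_eq_zero_iff_of_nonneg (fun k _ => hy0 k)).1 hB
          exact this k hk
        have hsS0 : sS = 0 := by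
          rw [hB] at hy1
          nlinarith [hy1, hdpos, hs0]
        have hyS : ∀ k ∈ S, y k = 0 := by
          intro k hk
          have := (Finset.sum_eq_zero_iff_of_nonneg (fun k _ => hy0 k)).1 hsS0
          exact this k hk
        have hy00 : y = 0 := by
          funext p
          by_cases hp : t ≤ p.val ∧ p.val < t + i
          · exact hyS p ((hmemS p).2 hp)
          · exact hyT p ((hmemT p).2 hp)
        rw [hy00]
        exact Submodule.zero_mem _
      · have hBpos : 0 < B := lt_of_le_of_ne hB0 (Ne.symm hB)
        -- the mixed generators
        have hgen2 : ∀ j ∈ S, ∀ k ∈ T,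
            (fun m : Fin n => if m = j then (i:ℝ)+1 else if m = k then (n:ℝ)-i-1 else 0)
              ∈ Submodule.span ℝ≥0 G := by
          intro j hj k hk
          have hjk : j ≠ k := by
            intro h
            rw [h] at hj
            exact ((hmemT k).1 hk) ((hmemS k).1 hj)
          apply Submodule.subset_span
          refine ⟨fun m => if m = j then i+1 else if m = k then n-(i+1) else 0, ⟨?_, ?_⟩, ?_⟩
          · have : (fun m : Fin n => if m = j then i+1 else if m = k then n-(i+1) else 0)
                = fun m => (if m = j then i+1 else 0) + (if m = k then n-(i+1) else 0) := by
              funext m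
              by_cases h1 : m = j
              · subst h1; simp [hjk]
              · by_cases h2 : m = k <;> simp [h1, h2, Ne.symm hjk]
            rw [this, Finset.sum_add_distrib, Finset.sum_ite_eq', Finset.sum_ite_eq']
            simp only [Finset.mem_univ, if_true]
            omega
          · have : ∀ m ∈ S, (if m = j then i+1 else if m = k then n-(i+1) else 0)
                = (if m = j then i+1 else 0) := by
              intro m hm
              have hmk : m ≠ k := by
                intro h
                exact ((hmemT k).1 hk) ((hmemS k).1 (h ▸ hm))
              by_cases h1 : m = j <;> simp [h1, hmk]
            rw [Finset.sum_congr rfl this, Finset.sum_ite_eq']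
            simp [hj]
          · funext m
            simp only
            by_cases h1 : m = j
            · simp [h1]
            · by_cases h2 : m = k
              · simp [h1, h2]
                push_cast [Nat.cast_sub hin]
                ring
              · simp [h1, h2]
        -- nonnegativity of the coefficients
        have hcpf : ∀ j k : Fin n, 0 ≤ y j * y k / (((i:ℝ)+1)*B) :=
          fun j k => div_nonneg (mul_nonneg (hy0 j) (hy0 k))
            (mul_nonneg (by positivity) hB0)
        have hrpf : ∀ k : Fin n,
            0 ≤ y k * (((i:ℝ)+1)*B - ((n:ℝ)-i-1)*sS) / (((n:ℝ)*((i:ℝ)+1))*B) :=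
          fun k => div_nonneg (mul_nonneg (hy0 k) hy1)
            (mul_nonneg (by positivity) hB0)
        have hi0 : ((i:ℝ)+1) ≠ 0 := by positivity
        have hn0 : (n:ℝ) ≠ 0 := by positivity
        have key : y =
            (∑ j ∈ S, ∑ k ∈ T, (⟨y j * y k / (((i:ℝ)+1)*B), hcpf j k⟩ : ℝ≥0) •
              (fun m : Fin n => if m = j then (i:ℝ)+1 else if m = k then (n:ℝ)-i-1 else 0))
            + ∑ k ∈ T,
                (⟨y k * (((i:ℝ)+1)*B - ((n:ℝ)-i-1)*sS) / (((n:ℝ)*((i:ℝ)+1))*B), hrpf k⟩ : ℝ≥0) •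
              (fun m : Fin n => if m = k then (n:ℝ) else 0) := by
          funext p
          simp only [Pi.add_apply, Finset.sum_apply, Pi.smul_apply, hsm, Nonneg.mk_smul, smul_eq_mul, NNReal.coe_mk]
          by_cases hp : t ≤ p.val ∧ p.val < t + i
          · have hpS : p ∈ S := (hmemS p).2 hp
            have hpT : p ∉ T := by rw [hmemT]; exact not_not_intro hp
            have e1 : ∀ j ∈ S, ∑ k ∈ T,
                (y j * y k / (((i:ℝ)+1)*B)) *
                  (if p = j then (i:ℝ)+1 else if p = k then (n:ℝ)-i-1 else 0)
                = if p = j then y j * B / (((i:ℝ)+1)*B) * ((i:ℝ)+1) else 0 := by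
              intro j hj
              by_cases h1 : p = j
              · simp only [h1, if_true]
                rw [← Finset.sum_mul, ← Finset.sum_div, ← Finset.mul_sum, ← hBdef]
              · simp only [h1, if_false]
                apply Finset.sum_eq_zero
                intro k hk
                have : p ≠ k := by
                  intro h; rw [h] at hp; exact ((hmemT k).1 hk) hp
                simp [this]
            rw [Finset.sum_congr rfl e1, Finset.sum_ite_eq, if_pos hpS]
            have e2 : ∑ k ∈ T,
                (y k * (((i:ℝ)+1)*B - ((n:ℝ)-i-1)*sS) / (((n:ℝ)*((i:ℝ)+1))*B)) *
                  (if p = k then (n:ℝ) else 0) = 0 := by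
              apply Finset.sum_eq_zero
              intro k hk
              have : p ≠ k := by
                intro h; rw [h] at hp; exact ((hmemT k).1 hk) hp
              simp [this]
            rw [e2, add_zero]
            field_simp
          · have hpT : p ∈ T := (hmemT p).2 hp
            have hpS : p ∉ S := by rw [hmemS]; exact hp
            have e1 : ∀ j ∈ S, ∑ k ∈ T,
                (y j * y k / (((i:ℝ)+1)*B)) *
                  (if p = j then (i:ℝ)+1 else if p = k then (n:ℝ)-i-1 else 0)
                = y j * y p / (((i:ℝ)+1)*B) * ((n:ℝ)-i-1) := by
              intro j hj
              have hpj : p ≠ j := by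
                intro h; rw [h] at hp; exact hp ((hmemS j).1 hj)
              have : ∀ k ∈ T, (y j * y k / (((i:ℝ)+1)*B)) *
                  (if p = j then (i:ℝ)+1 else if p = k then (n:ℝ)-i-1 else 0)
                  = if p = k then y j * y k / (((i:ℝ)+1)*B) * ((n:ℝ)-i-1) else 0 := by
                intro k hk
                simp [hpj, mul_ite, mul_zero]
              rw [Finset.sum_congr rfl this, Finset.sum_ite_eq, if_pos hpT]
            rw [Finset.sum_congr rfl e1]
            have e2 : ∑ k ∈ T,
                (y k * (((i:ℝ)+1)*B - ((n:ℝ)-i-1)*sS) / (((n:ℝ)*((i:ℝ)+1))*B)) *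
                  (if p = k then (n:ℝ) else 0)
                = y p * (((i:ℝ)+1)*B - ((n:ℝ)-i-1)*sS) / (((n:ℝ)*((i:ℝ)+1))*B) * (n:ℝ) := by
              have : ∀ k ∈ T, (y k * (((i:ℝ)+1)*B - ((n:ℝ)-i-1)*sS) / (((n:ℝ)*((i:ℝ)+1))*B)) *
                  (if p = k then (n:ℝ) else 0)
                  = if p = k then (y k * (((i:ℝ)+1)*B - ((n:ℝ)-i-1)*sS) / (((n:ℝ)*((i:ℝ)+1))*B)) * (n:ℝ) else 0 := by
                intro k hk
                simp [mul_ite, mul_zero]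
              rw [Finset.sum_congr rfl this, Finset.sum_ite_eq, if_pos hpT]
            rw [e2]
            have e3 : ∑ j ∈ S, y j * y p / (((i:ℝ)+1)*B) * ((n:ℝ)-i-1)
                = sS * y p / (((i:ℝ)+1)*B) * ((n:ℝ)-i-1) := by
              rw [← Finset.sum_mul, ← Finset.sum_div, ← Finset.sum_mul, ← hsSdef]
            rw [e3]
            field_simp
            ring
        rw [key]
        refine Submodule.add_mem _ ?_ ?_
        · exact Submodule.sum_mem _ fun j hj => Submodule.sum_mem _ fun k hk =>
            Submodule.smul_mem _ _ (hgen2 j hj k hk)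
        · exact Submodule.sum_mem _ fun k hk =>
            Submodule.smul_mem _ _ (hgen1 k (Or.inl hk))
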